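/- The Gelfond–Parry measure is invariant for the β-transformation: let 1 < β < 2 and let t_β : [0,1) → [0,1) be t_β(x) = βx mod 1 (the fractional part of βx). Define the orbit u_0 = 1, u_{n+1} = fractional part of β·u_n, and the density h : [0,1) → ℝ by h(y) = Σ_{n=0}^∞ β^{−n} · 𝟙[y < u_n]. Then the measure μ on [0,1) with density h with respect to Lebesgue measure is t_β-invariant: μ(t_β^{−1}(A)) = μ(A) for every Borel set A ⊆ [0,1). -/

import Mathlib

open MeasureTheory

-- basic bounds
lemma gp_u_mem {β : ℝ} (hβ1 : 1 < β) (u : ℕ → ℝ) (hu0 : u 0 = 1)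
    (hu : ∀ n : ℕ, u (n+1) = Int.fract (β * u n)) :
    ∀ n, 0 ≤ u n ∧ u n ≤ 1 := by
  intro n
  cases n with
  | zero => simp [hu0]
  | succ n => rw [hu n]; exact ⟨Int.fract_nonneg _, le_of_lt (Int.fract_lt_one _)⟩

lemma gp_floor01 {β : ℝ} (hβ1 : 1 < β) (hβ2 : β < 2) (u : ℕ → ℝ) (hu0 : u 0 = 1)
    (hu : ∀ n : ℕ, u (n+1) = Int.fract (β * u n)) (n : ℕ) :
    ⌊β * u n⌋ = 0 ∨ ⌊β * u n⌋ = 1 := by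
  have hβ0 : (0:ℝ) < β := lt_trans one_pos hβ1
  obtain ⟨h0, h1⟩ := gp_u_mem hβ1 u hu0 hu n
  have hge : (0:ℤ) ≤ ⌊β * u n⌋ := Int.floor_nonneg.mpr (mul_nonneg (le_of_lt hβ0) h0)
  have hlt : ⌊β * u n⌋ < 2 := by
    rw [Int.floor_lt]
    push_cast
    nlinarith
  omega

lemma gp_usucc {β : ℝ} (u : ℕ → ℝ)
    (hu : ∀ n : ℕ, u (n+1) = Int.fract (β * u n)) (n : ℕ) :
    u (n+1) = β * u n - (⌊β * u n⌋ : ℝ) := by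
  rw [hu n]; rfl

lemma gp_sum_one {β : ℝ} (hβ1 : 1 < β) (hβ2 : β < 2) (u : ℕ → ℝ) (hu0 : u 0 = 1)
    (hu : ∀ n : ℕ, u (n+1) = Int.fract (β * u n)) :
    HasSum (fun n => β⁻¹^(n+1) * (⌊β * u n⌋ : ℝ)) 1 := by
  have hβ0 : (0:ℝ) < β := lt_trans one_pos hβ1
  have hbinv0 : 0 ≤ β⁻¹ := le_of_lt (inv_pos.mpr hβ0)
  have hbinv : β⁻¹ < 1 := inv_lt_one_of_one_lt₀ hβ1
  have hnonneg : ∀ n, (0:ℝ) ≤ β⁻¹^(n+1) * (⌊β * u n⌋ : ℝ) := by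
    intro n
    rcases gp_floor01 hβ1 hβ2 u hu0 hu n with hd | hd <;> rw [hd] <;> positivity
  rw [hasSum_iff_tendsto_nat_of_nonneg hnonneg]
  have key : ∀ N, ∑ i ∈ Finset.range N, β⁻¹^(i+1) * (⌊β * u i⌋ : ℝ)
      = 1 - β⁻¹^N * u N := by
    intro N
    have h2 := Finset.sum_range_sub' (fun n => β⁻¹^n * u n) N
    simp only [pow_zero, one_mul, hu0] at h2
    rw [← h2]
    apply Finset.sum_congr rfl
    intro i _
    have h3 : u (i+1) = β * u i - (⌊β * u i⌋ : ℝ) := gp_usucc u hu i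
    have hβne : β ≠ 0 := ne_of_gt (lt_trans one_pos hβ1)
    have hc : β⁻¹ * β = 1 := inv_mul_cancel₀ hβne
    have hp : β⁻¹^(i+1) * β = β⁻¹^i := by
      rw [pow_succ, mul_assoc, hc, mul_one]
    linear_combination (β⁻¹^(i+1)) * h3 + (u i) * hp
  simp only [key]
  have htend : Filter.Tendsto (fun N => β⁻¹^N * u N) Filter.atTop (nhds 0) := by
    have hg : Filter.Tendsto (fun N => β⁻¹^N) Filter.atTop (nhds 0) :=
      tendsto_pow_atTop_nhds_zero_of_lt_one hbinv0 hbinv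
    refine squeeze_zero (fun N => mul_nonneg (pow_nonneg hbinv0 N) (gp_u_mem hβ1 u hu0 hu N).1)
      (fun N => ?_) hg
    calc β⁻¹^N * u N ≤ β⁻¹^N * 1 :=
          mul_le_mul_of_nonneg_left (gp_u_mem hβ1 u hu0 hu N).2 (pow_nonneg hbinv0 N)
      _ = β⁻¹^N := mul_one _
  have : Filter.Tendsto (fun N => 1 - β⁻¹^N * u N) Filter.atTop (nhds (1 - 0)) :=
    Filter.Tendsto.const_sub 1 htend
  simpa using this

lemma gp_summable' {β : ℝ} (hβ1 : 1 < β) (f : ℕ → ℝ) (h0 : ∀ n, 0 ≤ f n)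
    (h1 : ∀ n, f n ≤ β⁻¹^n) : Summable f := by
  have hβ0 : (0:ℝ) < β := lt_trans one_pos hβ1
  have hbinv0 : 0 ≤ β⁻¹ := le_of_lt (inv_pos.mpr hβ0)
  have hbinv : β⁻¹ < 1 := inv_lt_one_of_one_lt₀ hβ1
  exact Summable.of_nonneg_of_le h0 h1 (summable_geometric_of_lt_one hbinv0 hbinv)

lemma gp_funeq {β : ℝ} (hβ1 : 1 < β) (hβ2 : β < 2) (u : ℕ → ℝ) (hu0 : u 0 = 1)
    (hu : ∀ n : ℕ, u (n+1) = Int.fract (β * u n))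
    (h : ℝ → ℝ) (hh : ∀ y : ℝ, h y = ∑' n : ℕ, (1/β^n) * (if y < u n then (1:ℝ) else 0))
    (y : ℝ) (hy0 : 0 ≤ y) (hy1 : y < 1) :
    h y = β⁻¹ * h (β⁻¹*y) + (if y < β-1 then β⁻¹ * h (β⁻¹*(y+1)) else 0) := by
  have hβ0 : (0:ℝ) < β := lt_trans one_pos hβ1
  have hβne : β ≠ 0 := ne_of_gt hβ0
  have hbinv0 : 0 ≤ β⁻¹ := le_of_lt (inv_pos.mpr hβ0)
  have hbinv1 : β⁻¹ ≤ 1 := le_of_lt (inv_lt_one_of_one_lt₀ hβ1)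
  have hh' : ∀ z : ℝ, h z = ∑' n : ℕ, β⁻¹^n * (if z < u n then (1:ℝ) else 0) := by
    intro z; rw [hh z]
    apply tsum_congr; intro n; rw [one_div, inv_pow]
  have hiff : ∀ z w : ℝ, (β⁻¹*z < w ↔ z < β*w) := by
    intro z w
    rw [← mul_lt_mul_iff_right₀ hβ0, mul_inv_cancel_left₀ hβne]
  -- ingredient term functions
  set T1 : ℕ → ℝ := fun n => β⁻¹^(n+1) * (if y < β * u n then (1:ℝ) else 0) with hT1
  set T2 : ℕ → ℝ := fun n =>
    if y < β-1 then β⁻¹^(n+1) * (if y+1 < β * u n then (1:ℝ) else 0) else 0 with hT2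
  set D : ℕ → ℝ := fun n => β⁻¹^(n+1) * (⌊β * u n⌋ : ℝ) with hD
  set E : ℕ → ℝ := fun n => β⁻¹^(n+1) * (if y < u (n+1) then (1:ℝ) else 0) with hE
  have ite01 : ∀ (c : Prop) [Decidable c], (0:ℝ) ≤ (if c then (1:ℝ) else 0) ∧
      (if c then (1:ℝ) else 0) ≤ 1 := by
    intro c _; split_ifs <;> norm_num
  have hbd : ∀ n (c : Prop) [Decidable c], (0:ℝ) ≤ β⁻¹^(n+1) * (if c then (1:ℝ) else 0) ∧
      β⁻¹^(n+1) * (if c then (1:ℝ) else 0) ≤ β⁻¹^n := by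
    intro n c _
    constructor
    · exact mul_nonneg (pow_nonneg hbinv0 _) (ite01 c).1
    · calc β⁻¹^(n+1) * (if c then (1:ℝ) else 0) ≤ β⁻¹^(n+1) * 1 :=
            mul_le_mul_of_nonneg_left (ite01 c).2 (pow_nonneg hbinv0 _)
        _ = β⁻¹^n * β⁻¹ := by rw [mul_one, pow_succ]
        _ ≤ β⁻¹^n * 1 := mul_le_mul_of_nonneg_left hbinv1 (pow_nonneg hbinv0 _)
        _ = β⁻¹^n := mul_one _
  have hsT1 : Summable T1 := gp_summable' hβ1 T1 (fun n => (hbd n _).1) (fun n => (hbd n _).2)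
  have hsT2 : Summable T2 := by
    have hps : ∀ n:ℕ, β⁻¹^(n+1) ≤ β⁻¹^n := fun n =>
      pow_le_pow_of_le_one hbinv0 hbinv1 (Nat.le_succ n)
    refine gp_summable' hβ1 T2 ?_ ?_ <;> intro n <;> rw [hT2] <;> dsimp only <;>
      split_ifs <;>
      nlinarith [hps n, pow_nonneg hbinv0 n, pow_nonneg hbinv0 (n+1)]
  have hsE : Summable E := gp_summable' hβ1 E (fun n => (hbd n _).1) (fun n => (hbd n _).2)
  have hsD : Summable D := (gp_sum_one hβ1 hβ2 u hu0 hu).summable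
  -- first branch
  have hb1 : β⁻¹ * h (β⁻¹*y) = ∑' n, T1 n := by
    rw [hh' (β⁻¹*y), ← tsum_mul_left]
    apply tsum_congr; intro n
    rw [hT1]
    simp only []
    rw [show β⁻¹ * (β⁻¹^n * (if β⁻¹*y < u n then (1:ℝ) else 0))
        = β⁻¹^(n+1) * (if β⁻¹*y < u n then (1:ℝ) else 0) by rw [pow_succ]; ring]
    congr 2
    simp only [eq_iff_iff]
    exact hiff y (u n)
  -- second branch
  have hb2 : (if y < β-1 then β⁻¹ * h (β⁻¹*(y+1)) else 0) = ∑' n, T2 n := by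
    rw [hT2]
    split_ifs with hc
    · rw [hh' (β⁻¹*(y+1)), ← tsum_mul_left]
      apply tsum_congr; intro n
      rw [show β⁻¹ * (β⁻¹^n * (if β⁻¹*(y+1) < u n then (1:ℝ) else 0))
          = β⁻¹^(n+1) * (if β⁻¹*(y+1) < u n then (1:ℝ) else 0) by rw [pow_succ]; ring]
      congr 2
      simp only [eq_iff_iff]
      exact hiff (y+1) (u n)
    · exact tsum_zero.symm
  -- per-term identity
  have hterm : ∀ n, T1 n + T2 n = D n + E n := by
    intro n
    have husucc := gp_usucc u hu n
    have humem := gp_u_mem hβ1 u hu0 hu n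
    rcases gp_floor01 hβ1 hβ2 u hu0 hu n with hd | hd
    · -- floor = 0 : β u n < 1
      have hun1 : u (n+1) = β * u n := by rw [husucc, hd]; norm_num
      have hlt1 : β * u n < 1 := (Int.floor_eq_zero_iff.mp hd).2
      have hno : ¬ (y + 1 < β * u n) := by linarith
      simp only [hT1, hT2, hD, hE, hun1, hd, if_neg hno, mul_zero, ite_self,
        Int.cast_zero, add_zero, zero_add]
    · -- floor = 1 : 1 ≤ β u n
      have hone : (1:ℝ) ≤ β * u n := by
        have h5 := Int.floor_le (β * u n)
        rw [hd] at h5; exact_mod_cast h5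
      have hun1 : u (n+1) = β * u n - 1 := by rw [husucc, hd]; norm_num
      have hyes : y < β * u n := lt_of_lt_of_le hy1 hone
      have hT2E : T2 n = E n := by
        by_cases hy : y < u (n+1)
        · have h1 : y < β - 1 := by
            have hle : u (n+1) ≤ β - 1 := by nlinarith [humem.2]
            linarith
          have h2 : y + 1 < β * u n := by rw [hun1] at hy; linarith
          simp only [hT2, hE, if_pos h1, if_pos h2, if_pos hy]
        · have h2 : ¬ (y + 1 < β * u n) := by
            rw [hun1] at hy; push_neg at hy ⊢; linarith
          simp only [hT2, hE, if_neg hy, if_neg h2, mul_zero, ite_self]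
      simp only [hT1, hD, hd, if_pos hyes, hT2E, Int.cast_one, mul_one]
  -- assemble
  have hs0 : Summable (fun n => β⁻¹^n * (if y < u n then (1:ℝ) else 0)) := by
    refine gp_summable' hβ1 _ (fun n => mul_nonneg (pow_nonneg hbinv0 _) (ite01 _).1)
      (fun n => ?_)
    calc β⁻¹^n * (if y < u n then (1:ℝ) else 0) ≤ β⁻¹^n * 1 :=
          mul_le_mul_of_nonneg_left (ite01 _).2 (pow_nonneg hbinv0 _)
      _ = β⁻¹^n := mul_one _
  have hlhs : h y = 1 + ∑' n, E n := by
    rw [hh' y, Summable.tsum_eq_zero_add hs0]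
    congr 1
    simp [hu0, hy1]
  rw [hlhs, hb1, hb2, ← Summable.tsum_add hsT1 hsT2]
  rw [tsum_congr hterm, Summable.tsum_add hsD hsE, (gp_sum_one hβ1 hβ2 u hu0 hu).tsum_eq]

theorem gelfond_parry_measure_invariant (β : ℝ) (hβ1 : 1 < β) (hβ2 : β < 2)
    (u : ℕ → ℝ) (hu0 : u 0 = 1) (hu : ∀ n : ℕ, u (n+1) = Int.fract (β * u n))
    (h : ℝ → ℝ) (hh : ∀ y : ℝ, h y = ∑' n : ℕ, (1/β^n) * (if y < u n then (1:ℝ) else 0))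
    (μ : Measure ℝ)
    (hμ : μ = (volume.restrict (Set.Ico (0:ℝ) 1)).withDensity
        (fun y => ENNReal.ofReal (h y))) :
    ∀ A : Set ℝ, MeasurableSet A → A ⊆ Set.Ico (0:ℝ) 1 →
      μ ((fun x : ℝ => Int.fract (β * x)) ⁻¹' A) = μ A := by
  intro A hA hA1
  have hβ0 : (0:ℝ) < β := lt_trans one_pos hβ1
  have hβne : β ≠ 0 := ne_of_gt hβ0
  have hbinv0 : 0 ≤ β⁻¹ := le_of_lt (inv_pos.mpr hβ0)
  set g : ℝ → ENNReal := fun y => ENNReal.ofReal (h y) with hg_def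
  -- nonnegativity of h
  have hpos : ∀ y, 0 ≤ h y := by
    intro y; rw [hh y]
    apply tsum_nonneg
    intro n
    have hp : (0:ℝ) < 1/β^n := by positivity
    split_ifs <;> nlinarith
  -- measurability of g
  have hmterm : ∀ n : ℕ, Measurable (fun y : ℝ => (if y < u n then (1:ℝ) else 0)) := by
    intro n
    exact Measurable.ite (measurableSet_lt measurable_id measurable_const)
      measurable_const measurable_const
  have hsum0 : ∀ y : ℝ, Summable (fun n : ℕ => (1/β^n) * (if y < u n then (1:ℝ) else 0)) := by
    intro y
    refine gp_summable' hβ1 _ (fun n => ?_) (fun n => ?_)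
    · have hp : (0:ℝ) < 1/β^n := by positivity
      split_ifs <;> nlinarith
    · rw [one_div, ← inv_pow]
      have hp := pow_nonneg hbinv0 n
      split_ifs <;> nlinarith
  have hg : Measurable g := by
    have : ∀ y, g y = ∑' n : ℕ, ENNReal.ofReal ((1/β^n) * (if y < u n then (1:ℝ) else 0)) := by
      intro y
      rw [hg_def]
      simp only []
      rw [hh y]
      refine ENNReal.ofReal_tsum_of_nonneg (fun n => ?_) (hsum0 y)
      have hp : (0:ℝ) < 1/β^n := by positivity
      split_ifs <;> nlinarith
    rw [show g = fun y => ∑' n : ℕ, ENNReal.ofReal ((1/β^n) * (if y < u n then (1:ℝ) else 0))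
      from funext this]
    exact Measurable.ennreal_tsum fun n =>
      ENNReal.measurable_ofReal.comp ((hmterm n).const_mul _)
  -- μ on measurable subsets
  have hμ_apply : ∀ S : Set ℝ, MeasurableSet S →
      μ S = ∫⁻ y in S ∩ Set.Ico (0:ℝ) 1, g y ∂volume := by
    intro S hS
    rw [hμ, withDensity_apply _ hS, Measure.restrict_restrict hS]
  -- the two branches
  set S1 : Set ℝ := (fun x => β * x) ⁻¹' A with hS1_def
  set S2 : Set ℝ := (fun x => β * x - 1) ⁻¹' (A ∩ Set.Iio (β - 1)) with hS2_def
  have hmul : Measurable (fun x : ℝ => β * x) := measurable_id.const_mul β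
  have haff : Measurable (fun x : ℝ => β * x - 1) := hmul.sub_const 1
  have hS1m : MeasurableSet S1 := hA.preimage hmul
  have hS2m : MeasurableSet S2 := (hA.inter measurableSet_Iio).preimage haff
  have hTm : Measurable (fun x : ℝ => Int.fract (β * x)) := measurable_fract.comp hmul
  -- set decomposition
  have hset : (fun x : ℝ => Int.fract (β * x)) ⁻¹' A ∩ Set.Ico (0:ℝ) 1 = S1 ∪ S2 := by
    ext x
    simp only [hS1_def, hS2_def, Set.mem_inter_iff, Set.mem_preimage, Set.mem_union,
      Set.mem_Ico, Set.mem_Iio]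
    constructor
    · rintro ⟨hfr, hx0, hx1⟩
      by_cases hb : β * x < 1
      · left
        rwa [Int.fract_eq_self.mpr ⟨mul_nonneg (le_of_lt hβ0) hx0, hb⟩] at hfr
      · right
        push_neg at hb
        have hb2 : β * x < 2 := by nlinarith
        have hfl : ⌊β * x⌋ = 1 := by
          rw [Int.floor_eq_iff]
          constructor <;> push_cast <;> linarith
        have hfr2 : Int.fract (β * x) = β * x - 1 := by
          have : Int.fract (β * x) = β * x - (⌊β * x⌋ : ℝ) := rfl
          rw [this, hfl]; norm_num
        rw [hfr2] at hfr
        exact ⟨hfr, by nlinarith⟩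
    · rintro (hx | ⟨hx, hxlt⟩)
      · obtain ⟨h0, h1⟩ := hA1 hx
        have hx0 : 0 ≤ x := by nlinarith
        have hx1 : x < 1 := by nlinarith
        exact ⟨by rwa [Int.fract_eq_self.mpr ⟨h0, h1⟩], hx0, hx1⟩
      · obtain ⟨h0, h1⟩ := hA1 hx
        have hx0 : 0 ≤ x := by nlinarith
        have hx1 : x < 1 := by nlinarith
        have hfl : ⌊β * x⌋ = 1 := by
          rw [Int.floor_eq_iff]
          constructor <;> push_cast <;> linarith
        have hfr2 : Int.fract (β * x) = β * x - 1 := by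
          have : Int.fract (β * x) = β * x - (⌊β * x⌋ : ℝ) := rfl
          rw [this, hfl]; norm_num
        exact ⟨by rwa [hfr2], hx0, hx1⟩
  have hdisj : Disjoint S1 S2 := by
    rw [Set.disjoint_left]
    intro x hx1 hx2
    have h1 := (hA1 hx1).2
    have h2 := (hA1 hx2.1).1
    simp only [hS1_def, hS2_def, Set.mem_preimage] at h1 h2
    linarith
  -- change of variables for S1
  have hmap1 : Measure.map (fun x : ℝ => β * x) volume = ENNReal.ofReal β⁻¹ • volume := by
    rw [Real.map_volume_mul_left hβne, abs_of_pos (inv_pos.mpr hβ0)]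
  set g1 : ℝ → ENNReal := Set.indicator A (fun y => g (β⁻¹ * y)) with hg1_def
  have hg1 : Measurable g1 := (hg.comp (measurable_id.const_mul β⁻¹)).indicator hA
  have e1 : ∫⁻ x in S1, g x ∂volume
      = ENNReal.ofReal β⁻¹ * ∫⁻ y in A, g (β⁻¹ * y) ∂volume := by
    rw [← lintegral_indicator hS1m]
    have hcongr : ∀ x, Set.indicator S1 g x = g1 (β * x) := by
      intro x
      by_cases hx : β * x ∈ A
      · have hx1 : x ∈ S1 := hx
        rw [hg1_def, Set.indicator_of_mem hx, Set.indicator_of_mem hx1,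
          inv_mul_cancel_left₀ hβne]
      · have hx1 : x ∉ S1 := hx
        rw [hg1_def, Set.indicator_of_notMem hx, Set.indicator_of_notMem hx1]
    rw [lintegral_congr hcongr, ← lintegral_map hg1 hmul, hmap1, lintegral_smul_measure,
      hg1_def, lintegral_indicator hA, smul_eq_mul]
  -- change of variables for S2
  have hmap2 : Measure.map (fun x : ℝ => β * x - 1) volume = ENNReal.ofReal β⁻¹ • volume := by
    have hsub : Measurable (fun y : ℝ => y - 1) :=
      (measurePreserving_sub_right volume (1:ℝ)).measurable
    calc Measure.map (fun x : ℝ => β * x - 1) volume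
        = Measure.map ((fun y : ℝ => y - 1) ∘ (fun x : ℝ => β * x)) volume := rfl
      _ = Measure.map (fun y : ℝ => y - 1) (Measure.map (fun x : ℝ => β * x) volume) :=
          (Measure.map_map hsub hmul).symm
      _ = Measure.map (fun y : ℝ => y - 1) (ENNReal.ofReal β⁻¹ • volume) := by rw [hmap1]
      _ = ENNReal.ofReal β⁻¹ • Measure.map (fun y : ℝ => y - 1) volume :=
          Measure.map_smul _ _ _
      _ = ENNReal.ofReal β⁻¹ • volume := by
          rw [(measurePreserving_sub_right volume (1:ℝ)).map_eq]
  set g2 : ℝ → ENNReal := Set.indicator (A ∩ Set.Iio (β - 1)) (fun y => g (β⁻¹ * (y + 1)))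
    with hg2_def
  have hg2 : Measurable g2 :=
    (hg.comp ((measurable_id.add_const 1).const_mul β⁻¹)).indicator (hA.inter measurableSet_Iio)
  have e2 : ∫⁻ x in S2, g x ∂volume
      = ENNReal.ofReal β⁻¹ * ∫⁻ y in A ∩ Set.Iio (β - 1), g (β⁻¹ * (y + 1)) ∂volume := by
    rw [← lintegral_indicator hS2m]
    have hcongr : ∀ x, Set.indicator S2 g x = g2 (β * x - 1) := by
      intro x
      by_cases hx : β * x - 1 ∈ A ∩ Set.Iio (β - 1)
      · have hx1 : x ∈ S2 := hx
        rw [hg2_def, Set.indicator_of_mem hx, Set.indicator_of_mem hx1]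
        rw [show β * x - 1 + 1 = β * x by ring, inv_mul_cancel_left₀ hβne]
      · have hx1 : x ∉ S2 := hx
        rw [hg2_def, Set.indicator_of_notMem hx, Set.indicator_of_notMem hx1]
    rw [lintegral_congr hcongr, ← lintegral_map hg2 haff, hmap2, lintegral_smul_measure,
      hg2_def, lintegral_indicator (hA.inter measurableSet_Iio), smul_eq_mul]
  -- rewrite second set-integral as an indicator integral over A
  have e3 : ∫⁻ y in A ∩ Set.Iio (β - 1), g (β⁻¹ * (y + 1)) ∂volume
      = ∫⁻ y in A, Set.indicator (Set.Iio (β - 1)) (fun y => g (β⁻¹ * (y + 1))) y ∂volume := by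
    rw [lintegral_indicator measurableSet_Iio, Measure.restrict_restrict measurableSet_Iio,
      Set.inter_comm]
  -- main computation
  rw [hμ_apply _ (hA.preimage hTm), hμ_apply _ hA, hset,
    Set.inter_eq_self_of_subset_left hA1, lintegral_union hS2m hdisj, e1, e2, e3]
  have hmeas1 : Measurable (fun y : ℝ => g (β⁻¹ * y)) := hg.comp (measurable_id.const_mul β⁻¹)
  have hmeas2 : Measurable (Set.indicator (Set.Iio (β - 1)) (fun y : ℝ => g (β⁻¹ * (y + 1)))) :=
    (hg.comp ((measurable_id.add_const 1).const_mul β⁻¹)).indicator measurableSet_Iio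
  rw [← lintegral_const_mul _ hmeas1, ← lintegral_const_mul _ hmeas2,
    ← lintegral_add_left (hmeas1.const_mul _)]
  refine setLIntegral_congr_fun hA (fun y hy => ?_)
  obtain ⟨hy0, hy1⟩ := hA1 hy
  have hfe := gp_funeq hβ1 hβ2 u hu0 hu h hh y hy0 hy1
  rw [hg_def]
  simp only []
  rw [hfe, ENNReal.ofReal_add (mul_nonneg hbinv0 (hpos _)) (by
      split_ifs
      · exact mul_nonneg hbinv0 (hpos _)
      · exact le_rfl),
    ENNReal.ofReal_mul hbinv0]
  congr 1
  rw [Set.indicator_apply]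
  simp only [Set.mem_Iio]
  split_ifs with hc
  · rw [ENNReal.ofReal_mul hbinv0]
  · rw [ENNReal.ofReal_zero, mul_zero]
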